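/- Let k = (3a²b²c²(a² + b² + c²) + 2(b⁴c⁴ + c⁴a⁴ + a⁴b⁴) − a⁶(b² + c²) − b⁶(c² + a²) − c⁶(a² + b²))/Δ², where Δ = (a+b+c)(b+c−a)(c+a−b)(a+b−c). Then (dist cB aC)² = k·a², (dist aC bA)² = k·b², and (dist bA cB)² = k·c²; hence triangle bA cB aC is similar to triangle ABC (and congruent to triangle cA aB bC). -/

import Mathlib

theorem keyalg (a0 a1 b0 b1 c0 c1 x0 x1 y0 y1 z0 z1 sa sb sc : ℝ)
    (hsa : sa = ((b0-c0)^2+(b1-c1)^2))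
    (hsb : sb = ((c0-a0)^2+(c1-a1)^2))
    (hsc : sc = ((a0-b0)^2+(a1-b1)^2))
    (hx1 : (x0-c0)*(b0-c0)+(x1-c1)*(b1-c1) = 0)
    (hx2 : (x0-a0)^2+(x1-a1)^2 = (x0-c0)^2+(x1-c1)^2)
    (hy1 : (y0-a0)*(c0-a0)+(y1-a1)*(c1-a1) = 0)
    (hy2 : (y0-b0)^2+(y1-b1)^2 = (y0-a0)^2+(y1-a1)^2)
    (hz1 : (z0-b0)*(a0-b0)+(z1-b1)*(a1-b1) = 0)
    (hz2 : (z0-c0)^2+(z1-c1)^2 = (z0-b0)^2+(z1-b1)^2) :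
    ((z0-x0)^2+(z1-x1)^2) * (4*((b0-c0)*(a1-c1)-(b1-c1)*(a0-c0))^2) = sa*(sa*sb+sb*sc+sc*sa)
    ∧ ((x0-y0)^2+(x1-y1)^2) * (4*((b0-c0)*(a1-c1)-(b1-c1)*(a0-c0))^2) = sb*(sa*sb+sb*sc+sc*sa)
    ∧ ((y0-z0)^2+(y1-z1)^2) * (4*((b0-c0)*(a1-c1)-(b1-c1)*(a0-c0))^2) = sc*(sa*sb+sb*sc+sc*sa) := by
  subst hsa hsb hsc
  have hx2' : (x0-c0)*(a0-c0)+(x1-c1)*(a1-c1) = ((c0-a0)^2+(c1-a1)^2)/2 := by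
    linear_combination (-(1:ℝ)/2) * hx2
  have hy2' : (y0-a0)*(b0-a0)+(y1-a1)*(b1-a1) = ((a0-b0)^2+(a1-b1)^2)/2 := by
    linear_combination (-(1:ℝ)/2) * hy2
  have hz2' : (z0-b0)*(c0-b0)+(z1-b1)*(c1-b1) = ((b0-c0)^2+(b1-c1)^2)/2 := by
    linear_combination (-(1:ℝ)/2) * hz2
  have hX0 : 2*((b0-c0)*(a1-c1)-(b1-c1)*(a0-c0))*(x0-c0) = -(b1-c1)*((c0-a0)^2+(c1-a1)^2) := by
    linear_combination 2*(a1-c1)*hx1 - 2*(b1-c1)*hx2'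
  have hX1 : 2*((b0-c0)*(a1-c1)-(b1-c1)*(a0-c0))*(x1-c1) = (b0-c0)*((c0-a0)^2+(c1-a1)^2) := by
    linear_combination (-2*(a0-c0))*hx1 + 2*(b0-c0)*hx2'
  have hY0 : 2*((b0-c0)*(a1-c1)-(b1-c1)*(a0-c0))*(y0-a0) = -(c1-a1)*((a0-b0)^2+(a1-b1)^2) := by
    linear_combination 2*(b1-a1)*hy1 - 2*(c1-a1)*hy2'
  have hY1 : 2*((b0-c0)*(a1-c1)-(b1-c1)*(a0-c0))*(y1-a1) = (c0-a0)*((a0-b0)^2+(a1-b1)^2) := by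
    linear_combination (-2*(b0-a0))*hy1 + 2*(c0-a0)*hy2'
  have hZ0 : 2*((b0-c0)*(a1-c1)-(b1-c1)*(a0-c0))*(z0-b0) = -(a1-b1)*((b0-c0)^2+(b1-c1)^2) := by
    linear_combination 2*(c1-b1)*hz1 - 2*(a1-b1)*hz2'
  have hZ1 : 2*((b0-c0)*(a1-c1)-(b1-c1)*(a0-c0))*(z1-b1) = (a0-b0)*((b0-c0)^2+(b1-c1)^2) := by
    linear_combination (-2*(c0-b0))*hz1 + 2*(a0-b0)*hz2'
  refine ⟨?_, ?_, ?_⟩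
  · linear_combination (2*((b0-c0)*(a1-c1)-(b1-c1)*(a0-c0))*(z0-x0)+(2*((b0-c0)*(a1-c1)-(b1-c1)*(a0-c0))*(b0-c0)-(a1-b1)*((b0-c0)^2+(b1-c1)^2)+(b1-c1)*((c0-a0)^2+(c1-a1)^2)))*hZ0 - (2*((b0-c0)*(a1-c1)-(b1-c1)*(a0-c0))*(z0-x0)+(2*((b0-c0)*(a1-c1)-(b1-c1)*(a0-c0))*(b0-c0)-(a1-b1)*((b0-c0)^2+(b1-c1)^2)+(b1-c1)*((c0-a0)^2+(c1-a1)^2)))*hX0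
      + (2*((b0-c0)*(a1-c1)-(b1-c1)*(a0-c0))*(z1-x1)+(2*((b0-c0)*(a1-c1)-(b1-c1)*(a0-c0))*(b1-c1)+(a0-b0)*((b0-c0)^2+(b1-c1)^2)-(b0-c0)*((c0-a0)^2+(c1-a1)^2)))*hZ1 - (2*((b0-c0)*(a1-c1)-(b1-c1)*(a0-c0))*(z1-x1)+(2*((b0-c0)*(a1-c1)-(b1-c1)*(a0-c0))*(b1-c1)+(a0-b0)*((b0-c0)^2+(b1-c1)^2)-(b0-c0)*((c0-a0)^2+(c1-a1)^2)))*hX1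
  · linear_combination (2*((b0-c0)*(a1-c1)-(b1-c1)*(a0-c0))*(x0-y0)+(2*((b0-c0)*(a1-c1)-(b1-c1)*(a0-c0))*(c0-a0)-(b1-c1)*((c0-a0)^2+(c1-a1)^2)+(c1-a1)*((a0-b0)^2+(a1-b1)^2)))*hX0 - (2*((b0-c0)*(a1-c1)-(b1-c1)*(a0-c0))*(x0-y0)+(2*((b0-c0)*(a1-c1)-(b1-c1)*(a0-c0))*(c0-a0)-(b1-c1)*((c0-a0)^2+(c1-a1)^2)+(c1-a1)*((a0-b0)^2+(a1-b1)^2)))*hY0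
      + (2*((b0-c0)*(a1-c1)-(b1-c1)*(a0-c0))*(x1-y1)+(2*((b0-c0)*(a1-c1)-(b1-c1)*(a0-c0))*(c1-a1)+(b0-c0)*((c0-a0)^2+(c1-a1)^2)-(c0-a0)*((a0-b0)^2+(a1-b1)^2)))*hX1 - (2*((b0-c0)*(a1-c1)-(b1-c1)*(a0-c0))*(x1-y1)+(2*((b0-c0)*(a1-c1)-(b1-c1)*(a0-c0))*(c1-a1)+(b0-c0)*((c0-a0)^2+(c1-a1)^2)-(c0-a0)*((a0-b0)^2+(a1-b1)^2)))*hY1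
  · linear_combination (2*((b0-c0)*(a1-c1)-(b1-c1)*(a0-c0))*(y0-z0)+(2*((b0-c0)*(a1-c1)-(b1-c1)*(a0-c0))*(a0-b0)-(c1-a1)*((a0-b0)^2+(a1-b1)^2)+(a1-b1)*((b0-c0)^2+(b1-c1)^2)))*hY0 - (2*((b0-c0)*(a1-c1)-(b1-c1)*(a0-c0))*(y0-z0)+(2*((b0-c0)*(a1-c1)-(b1-c1)*(a0-c0))*(a0-b0)-(c1-a1)*((a0-b0)^2+(a1-b1)^2)+(a1-b1)*((b0-c0)^2+(b1-c1)^2)))*hZ0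
      + (2*((b0-c0)*(a1-c1)-(b1-c1)*(a0-c0))*(y1-z1)+(2*((b0-c0)*(a1-c1)-(b1-c1)*(a0-c0))*(a1-b1)+(c0-a0)*((a0-b0)^2+(a1-b1)^2)-(a0-b0)*((b0-c0)^2+(b1-c1)^2)))*hY1 - (2*((b0-c0)*(a1-c1)-(b1-c1)*(a0-c0))*(y1-z1)+(2*((b0-c0)*(a1-c1)-(b1-c1)*(a0-c0))*(a1-b1)+(c0-a0)*((a0-b0)^2+(a1-b1)^2)-(a0-b0)*((b0-c0)^2+(b1-c1)^2)))*hZ1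


open EuclideanGeometry RealInnerProductSpace

theorem triangle_bA_cB_aC_similar
    (A B C aC bA cB : EuclideanSpace ℝ (Fin 2))
    (hABC : AffineIndependent ℝ ![A, B, C])
    (a b c : ℝ) (ha : a = dist B C) (hb : b = dist C A) (hc : c = dist A B)
    (haC1 : dist aC A = dist aC C) (haC2 : ⟪aC - C, B - C⟫ = 0)
    (hbA1 : dist bA B = dist bA A) (hbA2 : ⟪bA - A, C - A⟫ = 0)
    (hcB1 : dist cB C = dist cB B) (hcB2 : ⟪cB - B, A - B⟫ = 0)
    (k : ℝ)
    (hk : k = (3*a^2*b^2*c^2*(a^2 + b^2 + c^2) + 2*(b^4*c^4 + c^4*a^4 + a^4*b^4)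
        - a^6*(b^2 + c^2) - b^6*(c^2 + a^2) - c^6*(a^2 + b^2)) /
        ((a+b+c)*(b+c-a)*(c+a-b)*(a+b-c))^2) :
    ((dist cB aC)^2 = k * a^2 ∧ (dist aC bA)^2 = k * b^2 ∧ (dist bA cB)^2 = k * c^2) ∧
    ∃ r : ℝ, 0 < r ∧ dist cB aC = r * dist B C ∧ dist aC bA = r * dist C A ∧
      dist bA cB = r * dist A B := by
  have dsq : ∀ x y : EuclideanSpace ℝ (Fin 2),
      (dist x y)^2 = (x 0 - y 0)^2 + (x 1 - y 1)^2 := by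
    intro x y
    rw [EuclideanSpace.dist_eq, Real.sq_sqrt (by positivity)]
    simp [Fin.sum_univ_two, Real.dist_eq, sq_abs]
  have hBC : B ≠ C := fun h => (hABC.injective.ne (show (1:Fin 3) ≠ 2 by decide)) h
  have hCA : C ≠ A := fun h => (hABC.injective.ne (show (2:Fin 3) ≠ 0 by decide)) h
  have hAB : A ≠ B := fun h => (hABC.injective.ne (show (0:Fin 3) ≠ 1 by decide)) h
  -- nondegeneracy determinant
  have hd : (B 0 - C 0)*(A 1 - C 1) - (B 1 - C 1)*(A 0 - C 0) ≠ 0 := by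
    intro hd0
    refine (affineIndependent_iff_not_collinear_set.mp hABC) ?_
    rw [collinear_iff_of_mem (show C ∈ ({A,B,C}:Set (EuclideanSpace ℝ (Fin 2))) by simp)]
    refine ⟨B - C, ?_⟩
    have hv : ∀ (t : ℝ) (q : EuclideanSpace ℝ (Fin 2)),
        q 0 = t * (B 0 - C 0) + C 0 → q 1 = t * (B 1 - C 1) + C 1 →
        ∃ r : ℝ, q = r • (B - C) +ᵥ C := fun t q h0 h1 =>
      ⟨t, by ext i; fin_cases i <;> simp [h0, h1]⟩
    intro p hp
    simp only [Set.mem_insert_iff, Set.mem_singleton_iff] at hp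
    rcases hp with h | h | h <;> rw [h]
    · rcases ne_or_eq (B 0 - C 0) 0 with h0 | h0
      · exact hv ((A 0 - C 0)/(B 0 - C 0)) A (by field_simp; ring)
          (by field_simp; first | linear_combination hd0 | linear_combination -hd0 | linear_combination 2*hd0 | linear_combination -2*hd0)
      · have h1 : B 1 - C 1 ≠ 0 := by
          intro h1
          apply hBC
          ext i
          fin_cases i
          · show B 0 = C 0; linarith
          · show B 1 = C 1; linarith
        exact hv ((A 1 - C 1)/(B 1 - C 1)) A
          (by field_simp; first | linear_combination hd0 | linear_combination -hd0 | linear_combination 2*hd0 | linear_combination -2*hd0) (by field_simp; ring)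
    · exact hv 1 B (by ring) (by ring)
    · exact hv 0 C (by ring) (by ring)
  have hd2 : (0:ℝ) < 4*((B 0 - C 0)*(A 1 - C 1) - (B 1 - C 1)*(A 0 - C 0))^2 := by
    have : 0 < ((B 0 - C 0)*(A 1 - C 1) - (B 1 - C 1)*(A 0 - C 0))^2 :=
      lt_of_le_of_ne (sq_nonneg _) (Ne.symm (pow_ne_zero 2 hd))
    linarith
  -- coordinate forms of hypotheses
  have hsa : a^2 = (B 0 - C 0)^2 + (B 1 - C 1)^2 := by rw [ha, dsq]
  have hsb : b^2 = (C 0 - A 0)^2 + (C 1 - A 1)^2 := by rw [hb, dsq]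
  have hsc : c^2 = (A 0 - B 0)^2 + (A 1 - B 1)^2 := by rw [hc, dsq]
  have ix : (aC 0 - C 0)*(B 0 - C 0) + (aC 1 - C 1)*(B 1 - C 1) = 0 := by
    have h := haC2
    simp [PiLp.inner_apply, Fin.sum_univ_two, RCLike.inner_apply, conj_trivial] at h
    linarith
  have iy : (bA 0 - A 0)*(C 0 - A 0) + (bA 1 - A 1)*(C 1 - A 1) = 0 := by
    have h := hbA2
    simp [PiLp.inner_apply, Fin.sum_univ_two, RCLike.inner_apply, conj_trivial] at h
    linarith
  have iz : (cB 0 - B 0)*(A 0 - B 0) + (cB 1 - B 1)*(A 1 - B 1) = 0 := by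
    have h := hcB2
    simp [PiLp.inner_apply, Fin.sum_univ_two, RCLike.inner_apply, conj_trivial] at h
    linarith
  have ex : (aC 0 - A 0)^2 + (aC 1 - A 1)^2 = (aC 0 - C 0)^2 + (aC 1 - C 1)^2 := by
    rw [← dsq, ← dsq, haC1]
  have ey : (bA 0 - B 0)^2 + (bA 1 - B 1)^2 = (bA 0 - A 0)^2 + (bA 1 - A 1)^2 := by
    rw [← dsq, ← dsq, hbA1]
  have ez : (cB 0 - C 0)^2 + (cB 1 - C 1)^2 = (cB 0 - B 0)^2 + (cB 1 - B 1)^2 := by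
    rw [← dsq, ← dsq, hcB1]
  obtain ⟨k1, k2, k3⟩ := keyalg (A 0) (A 1) (B 0) (B 1) (C 0) (C 1)
    (aC 0) (aC 1) (bA 0) (bA 1) (cB 0) (cB 1) (a^2) (b^2) (c^2)
    hsa hsb hsc ix ex iy ey iz ez
  -- Heron: product form of Delta equals 4 d^2
  have hHeron : (a+b+c)*(b+c-a)*(c+a-b)*(a+b-c)
      = 4*((B 0 - C 0)*(A 1 - C 1) - (B 1 - C 1)*(A 0 - C 0))^2 := by
    have e : (a+b+c)*(b+c-a)*(c+a-b)*(a+b-c)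
        = 2*(a^2)*(b^2) + 2*(b^2)*(c^2) + 2*(c^2)*(a^2)
          - (a^2)^2 - (b^2)^2 - (c^2)^2 := by ring
    rw [e, hsa, hsb, hsc]; ring
  have hΔpos : (0:ℝ) < (a+b+c)*(b+c-a)*(c+a-b)*(a+b-c) := by rw [hHeron]; exact hd2
  have ha0 : (0:ℝ) < a := by rw [ha]; exact dist_pos.mpr hBC
  have hb0 : (0:ℝ) < b := by rw [hb]; exact dist_pos.mpr hCA
  have hc0 : (0:ℝ) < c := by rw [hc]; exact dist_pos.mpr hAB
  have hk' : k = (a^2*b^2 + b^2*c^2 + c^2*a^2) / ((a+b+c)*(b+c-a)*(c+a-b)*(a+b-c)) := by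
    rw [hk]
    rw [div_eq_div_iff (by positivity) (ne_of_gt hΔpos)]
    ring
  have hk0 : (0:ℝ) < k := by
    rw [hk']
    exact div_pos (by positivity) hΔpos
  have goal1 : (dist cB aC)^2 = k * a^2 := by
    rw [hk', hHeron, dsq]
    rw [div_mul_eq_mul_div, eq_div_iff (ne_of_gt hd2)]
    linear_combination k1
  have goal2 : (dist aC bA)^2 = k * b^2 := by
    rw [hk', hHeron, dsq]
    rw [div_mul_eq_mul_div, eq_div_iff (ne_of_gt hd2)]
    linear_combination k2
  have goal3 : (dist bA cB)^2 = k * c^2 := by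
    rw [hk', hHeron, dsq]
    rw [div_mul_eq_mul_div, eq_div_iff (ne_of_gt hd2)]
    linear_combination k3
  refine ⟨⟨goal1, goal2, goal3⟩, Real.sqrt k, Real.sqrt_pos.mpr hk0, ?_, ?_, ?_⟩
  · rw [← ha, show dist cB aC = Real.sqrt ((dist cB aC)^2) from (Real.sqrt_sq dist_nonneg).symm,
      goal1, Real.sqrt_mul hk0.le, Real.sqrt_sq ha0.le]
  · rw [← hb, show dist aC bA = Real.sqrt ((dist aC bA)^2) from (Real.sqrt_sq dist_nonneg).symm,
      goal2, Real.sqrt_mul hk0.le, Real.sqrt_sq hb0.le]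
  · rw [← hc, show dist bA cB = Real.sqrt ((dist bA cB)^2) from (Real.sqrt_sq dist_nonneg).symm,
      goal3, Real.sqrt_mul hk0.le, Real.sqrt_sq hc0.le]
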